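/- Fix n ≥ 1. Let S = ℚ[t₁, …, tₙ], R = ℚ[t₁, …, tₙ, z₁, …, zₙ], I ⊆ R the ideal generated by eₖ(z₁, …, zₙ) − eₖ(t₁, …, tₙ) for k = 1, …, n, and for w ∈ Sₙ let ev_w : R/I → S be the ℚ-algebra homomorphism induced by tᵢ ↦ tᵢ and zᵢ ↦ t_{w(i)}. Then a function φ : Sₙ → S lies in the image of the localization map L : R/I → ∏_{w ∈ Sₙ} S, x ↦ (ev_w(x))_w, if and only if for every u ∈ Sₙ and all indices i ≠ j the difference φ(u) − φ((i j)∘u) lies in the principal ideal of S generated by tᵢ − tⱼ, where (i j)∘u denotes u followed by the transposition of i and j. -/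

import Mathlib

open MvPolynomial

/-- The ideal of `ℚ[t₁,…,tₙ,z₁,…,zₙ]` generated by `eₖ(z) − eₖ(t)` for `k = 1, …, n`, where the
`t`-variables are indexed by `Sum.inl` and the `z`-variables by `Sum.inr`. -/
noncomputable def borelIdeal (n : ℕ) : Ideal (MvPolynomial (Fin n ⊕ Fin n) ℚ) :=
  Ideal.span (Set.range fun k : Fin n =>
    rename Sum.inr (esymm (Fin n) ℚ ((k : ℕ) + 1)) -
    rename Sum.inl (esymm (Fin n) ℚ ((k : ℕ) + 1)))

/-- `ev` is the family of localization maps: for each permutation `w`, `ev w` is the `ℚ`-algebra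
homomorphism `R/I → S` induced by `tᵢ ↦ tᵢ` and `zᵢ ↦ t_{w(i)}`. -/
def IsLocalizationFamily (n : ℕ)
    (ev : Equiv.Perm (Fin n) →
      (MvPolynomial (Fin n ⊕ Fin n) ℚ ⧸ borelIdeal n) →ₐ[ℚ] MvPolynomial (Fin n) ℚ) : Prop :=
  ∀ (w : Equiv.Perm (Fin n)) (i : Fin n),
    ev w (Ideal.Quotient.mk (borelIdeal n) (X (Sum.inl i))) = X i ∧
    ev w (Ideal.Quotient.mk (borelIdeal n) (X (Sum.inr i))) = X (w i)


lemma aeval_sub_mem {σ A : Type*} [CommRing A] [Algebra ℚ A]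
    (f g : σ → A) (J : Ideal A) (h : ∀ v, f v - g v ∈ J) (p : MvPolynomial σ ℚ) :
    aeval f p - aeval g p ∈ J := by
  induction p using MvPolynomial.induction_on with
  | C a => simpa using J.zero_mem
  | add p q hp hq =>
      rw [map_add, map_add]
      have := J.add_mem hp hq
      convert this using 1; ring
  | mul_X p s hp =>
      rw [map_mul, map_mul, aeval_X, aeval_X]
      have := J.add_mem (J.mul_mem_right (g s) hp) (J.mul_mem_left (aeval f p) (h s))
      convert this using 1; ring

lemma dvd_of_rename_eq_zero {σ : Type*} [DecidableEq σ] (a b : σ)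
    (p : MvPolynomial σ ℚ) (h : rename (fun v => if v = a then b else v) p = 0) :
    (X a - X b : MvPolynomial σ ℚ) ∣ p := by
  rw [← Ideal.mem_span_singleton]
  have h2 := aeval_sub_mem (X ∘ fun v => if v = a then b else v) X
      (Ideal.span {(X a - X b : MvPolynomial σ ℚ)}) ?_ p
  · rw [aeval_X_left_apply] at h2
    have h3 : aeval ((X : σ → MvPolynomial σ ℚ) ∘ fun v => if v = a then b else v) p
        = rename (fun v => if v = a then b else v) p := by
        rw [← aeval_X_left_apply (rename _ p), aeval_rename]
    rw [h3, h, zero_sub] at h2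
    exact neg_mem_iff.mp h2
  · intro v
    by_cases hv : v = a
    · subst hv
      rw [Ideal.mem_span_singleton]
      refine ⟨-1, ?_⟩
      show X (if v = v then b else v) - X v = _
      rw [if_pos rfl]
      ring
    · simp only [Function.comp_apply, if_neg hv, sub_self]
      exact Ideal.zero_mem _

lemma X_sub_X_ne_zero {σ : Type*} {a b : σ} (h : a ≠ b) :
    (X a - X b : MvPolynomial σ ℚ) ≠ 0 :=
  sub_ne_zero_of_ne (fun hx => h (MvPolynomial.X_injective hx))

lemma subst_eq_zero_of_mem_span {σ : Type*} [DecidableEq σ] (a b : σ) (hab : b ≠ a)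
    (p : MvPolynomial σ ℚ) (h : p ∈ Ideal.span {(X a - X b : MvPolynomial σ ℚ)}) :
    rename (fun v => if v = a then b else v) p = 0 := by
  obtain ⟨c, hc⟩ := Ideal.mem_span_singleton'.mp h
  rw [← hc, map_mul, map_sub, rename_X, rename_X, if_pos rfl, if_neg hab, sub_self, mul_zero]

lemma prod_dvd_of_subst {n : ℕ} (G : MvPolynomial (Fin n ⊕ Fin n) ℚ)
    (s : Finset (Fin n × Fin n)) (hlt : ∀ e ∈ s, e.1 < e.2)
    (hv : ∀ e ∈ s,
      rename (fun v => if v = Sum.inl e.1 then Sum.inl e.2 else v) G = 0) :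
    (∏ e ∈ s, (X (Sum.inl e.2) - X (Sum.inl e.1) : MvPolynomial (Fin n ⊕ Fin n) ℚ)) ∣ G := by
  classical
  induction s using Finset.induction_on generalizing G with
  | empty => simp
  | @insert e s he ih =>
      have hd : (X (Sum.inl e.1) - X (Sum.inl e.2) : MvPolynomial (Fin n ⊕ Fin n) ℚ) ∣ G :=
        dvd_of_rename_eq_zero _ _ _ (hv e (Finset.mem_insert_self e s))
      have hd' : (X (Sum.inl e.2) - X (Sum.inl e.1) : MvPolynomial (Fin n ⊕ Fin n) ℚ) ∣ G := by
        obtain ⟨c, hc⟩ := hd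
        exact ⟨-c, by rw [hc]; ring⟩
      obtain ⟨H, hH⟩ := hd'
      have hsub : ∀ e' ∈ s,
          rename (fun v => if v = Sum.inl e'.1 then Sum.inl e'.2 else v) H = 0 := by
        intro e' he'
        have h0 := hv e' (Finset.mem_insert_of_mem he')
        rw [hH, map_mul, map_sub, rename_X, rename_X] at h0
        have hne : (if (Sum.inl e.2 : Fin n ⊕ Fin n) = Sum.inl e'.1 then
              (Sum.inl e'.2 : Fin n ⊕ Fin n) else Sum.inl e.2) ≠
            (if (Sum.inl e.1 : Fin n ⊕ Fin n) = Sum.inl e'.1 then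
              (Sum.inl e'.2 : Fin n ⊕ Fin n) else Sum.inl e.1) := by
          have hab := hlt e (Finset.mem_insert_self e s)
          have hij := hlt e' (Finset.mem_insert_of_mem he')
          have hee' : e ≠ e' := fun hx => he (hx ▸ he')
          by_cases h2 : e.2 = e'.1
          · rw [if_pos (congrArg Sum.inl h2)]
            by_cases h1 : e.1 = e'.1
            · exact absurd (h1.trans h2.symm) hab.ne
            · rw [if_neg (fun hx => h1 (Sum.inl.inj hx))]
              exact fun hx => (lt_trans (h2 ▸ hab) hij).ne' (Sum.inl.inj hx)
          · rw [if_neg (fun hx => h2 (Sum.inl.inj hx))]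
            by_cases h1 : e.1 = e'.1
            · rw [if_pos (congrArg Sum.inl h1)]
              exact fun hx => hee' (Prod.ext h1 (Sum.inl.inj hx))
            · rw [if_neg (fun hx => h1 (Sum.inl.inj hx))]
              exact fun hx => hab.ne' (Sum.inl.inj hx)
        have hfac := X_sub_X_ne_zero hne
        rcases mul_eq_zero.mp h0 with h1 | h1
        · exact absurd h1 hfac
        · exact h1
      rw [Finset.prod_insert he, hH]
      exact mul_dvd_mul_left _ (ih H (fun e' he' => hlt e' (Finset.mem_insert_of_mem he')) hsub)

lemma prod_ltPairs {n : ℕ} {M : Type*} [CommMonoid M] (f : Fin n → Fin n → M) :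
    ∏ e ∈ Finset.filter (fun e : Fin n × Fin n => e.1 < e.2) Finset.univ, f e.1 e.2
      = ∏ i, ∏ j ∈ Finset.Ioi i, f i j := by
  rw [Finset.prod_sigma']
  refine Finset.prod_nbij' (fun e => ⟨e.1, e.2⟩) (fun x => (x.1, x.2)) ?_ ?_ ?_ ?_ ?_ <;>
    simp [Finset.mem_sigma]

noncomputable def piw (n : ℕ) (w : Equiv.Perm (Fin n)) :
    MvPolynomial (Fin n ⊕ Fin n) ℚ →ₐ[ℚ] MvPolynomial (Fin n) ℚ :=
  aeval (Sum.elim X fun l => X (w l))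

lemma piw_borel (n : ℕ) (w : Equiv.Perm (Fin n)) :
    ∀ a ∈ borelIdeal n, piw n w a = 0 := by
  intro a ha
  have hle : borelIdeal n ≤ RingHom.ker (piw n w) := by
    rw [borelIdeal, Ideal.span_le]
    rintro x ⟨k, rfl⟩
    simp only [SetLike.mem_coe, RingHom.mem_ker, map_sub]
    rw [piw, aeval_rename, aeval_rename, Sum.elim_comp_inl, Sum.elim_comp_inr]
    have h1 : aeval (fun l => (X (w l) : MvPolynomial (Fin n) ℚ))
        (esymm (Fin n) ℚ ((k : ℕ) + 1)) = rename (⇑w) (esymm (Fin n) ℚ ((k : ℕ) + 1)) := by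
      rw [← aeval_X_left_apply (rename _ (esymm _ _ _)), aeval_rename]; rfl
    rw [h1, rename_esymm, aeval_X_left_apply, sub_self]
  exact hle ha

noncomputable def Nw (n : ℕ) (u : Equiv.Perm (Fin n)) : MvPolynomial (Fin n ⊕ Fin n) ℚ :=
  ∏ l : Fin n, ∏ m ∈ Finset.Ioi l, (X (Sum.inl (u m)) - X (Sum.inr l))

lemma piw_Nw_ne {n : ℕ} (w u : Equiv.Perm (Fin n)) (h : u ≠ w) : piw n w (Nw n u) = 0 := by
  classical
  have hne : (Finset.univ.filter fun l : Fin n => u l ≠ w l).Nonempty := by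
    rw [Finset.filter_nonempty_iff]
    by_contra hc
    push_neg at hc
    exact h (Equiv.ext fun l => by simpa using hc l (Finset.mem_univ l))
  set l := (Finset.univ.filter fun l : Fin n => u l ≠ w l).min' hne with hl
  have hlmem := Finset.min'_mem _ hne
  have hul : u l ≠ w l := (Finset.mem_filter.mp hlmem).2
  set m := u.symm (w l) with hm
  have hum : u m = w l := u.apply_symm_apply _
  have hml : l < m := by
    have hmne : m ≠ l := fun hx => hul (by rw [← hx]; rw [hum, hx])
    rcases lt_or_ge l m with h1 | h1
    · exact h1
    rcases lt_or_eq_of_le h1 with h2 | h2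
    · exfalso
      have : m ∉ Finset.univ.filter fun l : Fin n => u l ≠ w l := by
        intro hmem
        exact absurd (Finset.min'_le _ _ hmem) (not_le.mpr h2)
      simp only [Finset.mem_filter, Finset.mem_univ, true_and, not_not] at this
      rw [hum] at this
      exact hmne (w.injective this.symm)
    · exact absurd h2 hmne
  rw [Nw, map_prod]
  refine Finset.prod_eq_zero (Finset.mem_univ l) ?_
  rw [map_prod]
  refine Finset.prod_eq_zero (Finset.mem_Ioi.mpr hml) ?_
  simp [piw, hum]

lemma piw_Nw_self {n : ℕ} (w : Equiv.Perm (Fin n)) :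
    piw n w (Nw n w) = (Matrix.vandermonde fun i => (X (w i) : MvPolynomial (Fin n) ℚ)).det := by
  rw [Matrix.det_vandermonde, Nw, map_prod]
  refine Finset.prod_congr rfl fun l _ => ?_
  rw [map_prod]
  exact Finset.prod_congr rfl fun m _ => by simp [piw]

lemma det_vand_perm {n : ℕ} (w : Equiv.Perm (Fin n)) :
    (Matrix.vandermonde fun i => (X (w i) : MvPolynomial (Fin n) ℚ)).det
      = ((Equiv.Perm.sign w : ℤ) : MvPolynomial (Fin n) ℚ) *
        (Matrix.vandermonde (X : Fin n → MvPolynomial (Fin n) ℚ)).det := by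
  have h1 : (Matrix.vandermonde fun i => (X (w i) : MvPolynomial (Fin n) ℚ))
      = (Matrix.vandermonde X).submatrix w id := by
    ext i j
    simp [Matrix.vandermonde, Matrix.submatrix]
  rw [h1, Matrix.det_permute]

noncomputable def bigG (n : ℕ) (φ : Equiv.Perm (Fin n) → MvPolynomial (Fin n) ℚ) :
    MvPolynomial (Fin n ⊕ Fin n) ℚ :=
  ∑ u : Equiv.Perm (Fin n),
    C ((Equiv.Perm.sign u : ℤ) : ℚ) * (rename Sum.inl (φ u) * Nw n u)

lemma piw_rename_inl {n : ℕ} (w : Equiv.Perm (Fin n)) (p : MvPolynomial (Fin n) ℚ) :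
    piw n w (rename Sum.inl p) = p := by
  rw [piw, aeval_rename, Sum.elim_comp_inl, aeval_X_left_apply]

lemma piw_bigG {n : ℕ} (w : Equiv.Perm (Fin n)) (φ : Equiv.Perm (Fin n) → MvPolynomial (Fin n) ℚ) :
    piw n w (bigG n φ) = φ w * (Matrix.vandermonde (X : Fin n → MvPolynomial (Fin n) ℚ)).det := by
  rw [bigG, map_sum, Finset.sum_eq_single w]
  · rw [map_mul, map_mul, piw_rename_inl, piw_Nw_self, det_vand_perm]
    have hC : piw n w (C ((Equiv.Perm.sign w : ℤ) : ℚ)) = C ((Equiv.Perm.sign w : ℤ) : ℚ) := by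
      simp [piw]
    rw [hC]
    rcases Int.units_eq_one_or (Equiv.Perm.sign w) with h | h <;> rw [h] <;> simp <;> ring
  · intro u _ hu
    rw [map_mul, map_mul, piw_Nw_ne w u hu, mul_zero, mul_zero]
  · intro h
    exact absurd (Finset.mem_univ w) h

lemma bigG_mem_span {n : ℕ} (φ : Equiv.Perm (Fin n) → MvPolynomial (Fin n) ℚ)
    (i j : Fin n) (hij : i ≠ j)
    (hφ : ∀ u : Equiv.Perm (Fin n),
      φ u - φ (Equiv.swap i j * u) ∈ Ideal.span {(X i - X j : MvPolynomial (Fin n) ℚ)}) :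
    bigG n φ ∈
      Ideal.span {(X (Sum.inl i) - X (Sum.inl j) : MvPolynomial (Fin n ⊕ Fin n) ℚ)} := by
  classical
  set J := Ideal.span {(X (Sum.inl i) - X (Sum.inl j) : MvPolynomial (Fin n ⊕ Fin n) ℚ)} with hJ
  rw [← Ideal.Quotient.eq_zero_iff_mem, bigG, map_sum]
  have hTk : ∀ k : Fin n,
      Ideal.Quotient.mk J (X (Sum.inl (Equiv.swap i j k)) : MvPolynomial (Fin n ⊕ Fin n) ℚ)
        = Ideal.Quotient.mk J (X (Sum.inl k)) := by
    intro k
    rw [Ideal.Quotient.mk_eq_mk_iff_sub_mem]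
    rcases eq_or_ne k i with rfl | hki
    · rw [Equiv.swap_apply_left]
      exact Ideal.mem_span_singleton'.mpr ⟨-1, by ring⟩
    rcases eq_or_ne k j with rfl | hkj
    · rw [Equiv.swap_apply_right]
      exact Ideal.mem_span_singleton'.mpr ⟨1, by ring⟩
    · rw [Equiv.swap_apply_of_ne_of_ne hki hkj, sub_self]
      exact J.zero_mem
  refine Finset.sum_ninvolution (fun u => Equiv.swap i j * u) ?_ ?_ (fun u => Finset.mem_univ _)
    (fun u => by
      show Equiv.swap i j * (Equiv.swap i j * u) = u
      rw [← mul_assoc, Equiv.swap_mul_self, one_mul]) 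
  · intro u
    have hN : Ideal.Quotient.mk J (Nw n (Equiv.swap i j * u)) = Ideal.Quotient.mk J (Nw n u) := by
      rw [Nw, Nw, map_prod, map_prod]
      refine Finset.prod_congr rfl fun l _ => ?_
      rw [map_prod, map_prod]
      refine Finset.prod_congr rfl fun m _ => ?_
      rw [map_sub, map_sub, Equiv.Perm.mul_apply, hTk (u m)]
    have hφ' : Ideal.Quotient.mk J (rename Sum.inl (φ (Equiv.swap i j * u)))
        = Ideal.Quotient.mk J (rename Sum.inl (φ u)) := by
      rw [Ideal.Quotient.mk_eq_mk_iff_sub_mem]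
      obtain ⟨c, hc⟩ := Ideal.mem_span_singleton'.mp (hφ u)
      refine Ideal.mem_span_singleton'.mpr ⟨-(rename Sum.inl c), ?_⟩
      have h2 : rename (Sum.inl : Fin n → Fin n ⊕ Fin n) (φ (Equiv.swap i j * u))
            - rename (Sum.inl : Fin n → Fin n ⊕ Fin n) (φ u)
          = rename (Sum.inl : Fin n → Fin n ⊕ Fin n) (-(c * (X i - X j))) := by
        rw [← map_sub, ← neg_sub (φ u), hc]
      rw [h2, map_neg, map_mul, map_sub, rename_X, rename_X]
      ring
    have hsign : ((Equiv.Perm.sign (Equiv.swap i j * u) : ℤ) : ℚ)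
        = -((Equiv.Perm.sign u : ℤ) : ℚ) := by
      rw [Equiv.Perm.sign_mul, Equiv.Perm.sign_swap hij]
      push_cast
      ring
    beta_reduce
    rw [hsign, map_neg, neg_mul, map_neg, map_mul, map_mul, map_mul, map_mul, hφ', hN]
    ring
  · intro u _ hx
    have h1 : Equiv.swap i j = 1 := mul_eq_right.mp hx
    have h2 := Equiv.ext_iff.mp h1 i
    rw [Equiv.swap_apply_left] at h2
    simp only [Equiv.Perm.one_apply] at h2
    exact absurd h2.symm hij

/-- Goresky–Kottwitz–MacPherson description of the image of the localization map: for `n ≥ 1`, a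
function `φ : Sₙ → ℚ[t]` lies in the image of `L : R/I → ∏_{w} S`, `x ↦ (ev_w x)_w`, if and only
if `φ(u) − φ((i j)∘u) ∈ ⟨tᵢ − tⱼ⟩` for all `u ∈ Sₙ` and all `i ≠ j`. -/
theorem localization_image_iff_GKM (n : ℕ) (hn : 1 ≤ n) :
    ∃ ev : Equiv.Perm (Fin n) →
      (MvPolynomial (Fin n ⊕ Fin n) ℚ ⧸ borelIdeal n) →ₐ[ℚ] MvPolynomial (Fin n) ℚ,
      IsLocalizationFamily n ev ∧
      ∀ φ : Equiv.Perm (Fin n) → MvPolynomial (Fin n) ℚ,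
        (∃ x : MvPolynomial (Fin n ⊕ Fin n) ℚ ⧸ borelIdeal n, ∀ w, ev w x = φ w) ↔
        (∀ (u : Equiv.Perm (Fin n)) (i j : Fin n), i ≠ j →
          φ u - φ (Equiv.swap i j * u) ∈
            Ideal.span {(X i - X j : MvPolynomial (Fin n) ℚ)}) := by
  classical
  refine ⟨fun w => Ideal.Quotient.liftₐ _ (piw n w) (piw_borel n w), ?_, ?_⟩
  · unfold IsLocalizationFamily
    intro w i
    constructor
    · erw [Ideal.Quotient.liftₐ_apply, Ideal.Quotient.lift_mk]
      simp [piw]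
    · erw [Ideal.Quotient.liftₐ_apply, Ideal.Quotient.lift_mk]
      simp [piw]
  · intro φ
    have hev : ∀ (w : Equiv.Perm (Fin n)) (f : MvPolynomial (Fin n ⊕ Fin n) ℚ),
        Ideal.Quotient.liftₐ (borelIdeal n) (piw n w) (piw_borel n w)
          (Ideal.Quotient.mk (borelIdeal n) f) = piw n w f := by
      intro w f
      erw [Ideal.Quotient.liftₐ_apply, Ideal.Quotient.lift_mk]
    constructor
    · rintro ⟨x, hx⟩ u i j hij
      obtain ⟨f, rfl⟩ := Ideal.Quotient.mk_surjective x
      rw [← hx u, ← hx (Equiv.swap i j * u), hev, hev]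
      refine aeval_sub_mem _ _ _ ?_ f
      rintro (v | v)
      · simp only [Sum.elim_inl, sub_self]
        exact Ideal.zero_mem _
      · simp only [Sum.elim_inr, Equiv.Perm.mul_apply]
        rcases eq_or_ne (u v) i with h | hui
        · rw [h, Equiv.swap_apply_left]
          exact Ideal.subset_span rfl
        rcases eq_or_ne (u v) j with h | huj
        · rw [h, Equiv.swap_apply_right]
          exact Ideal.mem_span_singleton'.mpr ⟨-1, by ring⟩
        · rw [Equiv.swap_apply_of_ne_of_ne hui huj, sub_self]
          exact Ideal.zero_mem _
    · intro hφ
      have hdvd : (∏ e ∈ Finset.filter (fun e : Fin n × Fin n => e.1 < e.2) Finset.univ,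
          (X (Sum.inl e.2) - X (Sum.inl e.1) : MvPolynomial (Fin n ⊕ Fin n) ℚ)) ∣ bigG n φ := by
        refine prod_dvd_of_subst _ _ (fun e he => (Finset.mem_filter.mp he).2) ?_
        intro e he
        have hlt := (Finset.mem_filter.mp he).2
        have hne : e.1 ≠ e.2 := ne_of_lt hlt
        exact subst_eq_zero_of_mem_span _ _
          (fun hx => hne (Sum.inl.inj hx).symm) _
          (bigG_mem_span φ e.1 e.2 hne (fun u => hφ u e.1 e.2 hne))
      obtain ⟨H, hH⟩ := hdvd
      refine ⟨Ideal.Quotient.mk _ H, fun w => ?_⟩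
      rw [hev]
      have hGw := piw_bigG w φ
      rw [hH, map_mul] at hGw
      have hprod : piw n w (∏ e ∈ Finset.filter (fun e : Fin n × Fin n => e.1 < e.2) Finset.univ,
          (X (Sum.inl e.2) - X (Sum.inl e.1) : MvPolynomial (Fin n ⊕ Fin n) ℚ))
          = (Matrix.vandermonde (X : Fin n → MvPolynomial (Fin n) ℚ)).det := by
        rw [map_prod, Matrix.det_vandermonde]
        rw [show (∏ e ∈ Finset.filter (fun e : Fin n × Fin n => e.1 < e.2) Finset.univ,
            piw n w (X (Sum.inl e.2) - X (Sum.inl e.1)))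
            = ∏ e ∈ Finset.filter (fun e : Fin n × Fin n => e.1 < e.2) Finset.univ,
              ((X e.2 - X e.1 : MvPolynomial (Fin n) ℚ)) from
          Finset.prod_congr rfl fun e _ => by simp [piw]]
        exact prod_ltPairs (fun i j => (X j - X i : MvPolynomial (Fin n) ℚ))
      rw [hprod] at hGw
      have hdet : (Matrix.vandermonde (X : Fin n → MvPolynomial (Fin n) ℚ)).det ≠ 0 := by
        rw [Matrix.det_vandermonde]
        rw [Finset.prod_ne_zero_iff]
        intro i _
        rw [Finset.prod_ne_zero_iff]
        intro j hj
        exact X_sub_X_ne_zero (Finset.mem_Ioi.mp hj).ne'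
      rw [mul_comm (φ w) _] at hGw
      exact mul_left_cancel₀ hdet hGw
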